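/- arXiv:2310.09250 — 7 statements merged into one kernel-verified Lean document; each statement's English description precedes it below -/
import Mathlib

section
/- Let c > 1 and let w be a random variable with w = c/(c+F) where F has density 1/(1+x)^2 on (0,∞). Then E[w] = c(c - log c - 1)/(c-1)^2 and Var(w) = c((c-1)^2 - c·(log c)^2)/(c-1)^4. -/
open MeasureTheory Real Set Filter

private lemma inv_one_add_tendsto : Tendsto (fun y : ℝ => (1+y)⁻¹) atTop (nhds 0) :=
  tendsto_inv_atTop_zero.comp (tendsto_atTop_add_const_left _ 1 tendsto_id)

private lemma inv_c_add_tendsto (c : ℝ) : Tendsto (fun y : ℝ => (c+y)⁻¹) atTop (nhds 0) :=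
  tendsto_inv_atTop_zero.comp (tendsto_atTop_add_const_left _ c tendsto_id)

private lemma log_diff_tendsto (c : ℝ) (hc : 1 < c) :
    Tendsto (fun y : ℝ => Real.log (c+y) - Real.log (1+y)) atTop (nhds 0) := by
  have h2 : Tendsto (fun y : ℝ => 1 + (c-1) * (1+y)⁻¹) atTop (nhds 1) := by
    have := (inv_one_add_tendsto.const_mul (c-1)).const_add 1
    simpa using this
  have h3 : Tendsto (fun y : ℝ => Real.log (1 + (c-1) * (1+y)⁻¹)) atTop (nhds 0) := by
    have := (Real.continuousAt_log (by norm_num : (1:ℝ) ≠ 0)).tendsto.comp h2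
    simpa [Function.comp_def] using this
  refine h3.congr' ?_
  filter_upwards [eventually_gt_atTop (0:ℝ)] with y hy
  have h1y : (0:ℝ) < 1 + y := by linarith
  have hcy : (0:ℝ) < c + y := by linarith
  rw [show 1 + (c-1) * (1+y)⁻¹ = (c+y)/(1+y) by field_simp; ring,
    Real.log_div hcy.ne' h1y.ne']

private lemma first_integral (c : ℝ) (hc : 1 < c) :
    ∫ x in Ioi (0 : ℝ), (c / (c + x)) * (1 / (1 + x) ^ 2)
        = c * (c - Real.log c - 1) / (c - 1) ^ 2 := by
  set g : ℝ → ℝ := fun y => c * ((Real.log (c+y) - Real.log (1+y)) / (c-1)^2 - (1+y)⁻¹/(c-1))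
    with hg
  have hc3 : c - 1 ≠ 0 := by linarith
  have hderiv : ∀ x ∈ Ici (0:ℝ), HasDerivAt g ((c/(c+x)) * (1/(1+x)^2)) x := by
    intro x hx
    have hx0 : (0:ℝ) ≤ x := hx
    have h1x : (0:ℝ) < 1 + x := by linarith
    have hcx : (0:ℝ) < c + x := by linarith
    have d1 : HasDerivAt (fun y : ℝ => Real.log (c+y)) (1/(c+x)) x :=
      ((hasDerivAt_id x).const_add c).log hcx.ne'
    have d2 : HasDerivAt (fun y : ℝ => Real.log (1+y)) (1/(1+x)) x :=
      ((hasDerivAt_id x).const_add 1).log h1x.ne'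
    have d3 : HasDerivAt (fun y : ℝ => (1+y)⁻¹) (-1/(1+x)^2) x := by
      simpa [Pi.inv_def] using ((hasDerivAt_id x).const_add 1).inv h1x.ne'
    have D := (((d1.sub d2).div_const ((c-1)^2)).sub (d3.div_const (c-1))).const_mul c
    refine D.congr_deriv ?_
    field_simp
    ring
  have htend : Tendsto g atTop (nhds 0) := by
    have := (((log_diff_tendsto c hc).div_const ((c-1)^2)).sub
      (inv_one_add_tendsto.div_const (c-1))).const_mul c
    simpa using this
  have key := integral_Ioi_of_hasDerivAt_of_nonneg
    ((hderiv 0 self_mem_Ici).continuousAt.continuousWithinAt)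
    (fun x hx => hderiv x (le_of_lt (show (0:ℝ) < x from hx)))
    (fun x hx => by
      have hx0 : (0:ℝ) < x := hx
      have h1x : (0:ℝ) < 1 + x := by linarith
      have hcx : (0:ℝ) < c + x := by linarith
      positivity)
    htend
  rw [key, hg]
  have hlc : Real.log (1 + 0) = 0 := by norm_num
  simp only [add_zero, hlc, Real.log_one]
  field_simp
  ring

private lemma second_integral (c : ℝ) (hc : 1 < c) :
    ∫ x in Ioi (0 : ℝ), (c / (c + x)) ^ 2 * (1 / (1 + x) ^ 2)
        = c * (c^2 - 1 - 2*c*Real.log c) / (c - 1) ^ 3 := by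
  set g : ℝ → ℝ := fun y => (c^2/(c-1)^2) *
      (-(1+y)⁻¹ - (c+y)⁻¹ - (2/(c-1)) * (Real.log (1+y) - Real.log (c+y))) with hg
  have hc3 : c - 1 ≠ 0 := by linarith
  have hderiv : ∀ x ∈ Ici (0:ℝ), HasDerivAt g ((c/(c+x))^2 * (1/(1+x)^2)) x := by
    intro x hx
    have hx0 : (0:ℝ) ≤ x := hx
    have h1x : (0:ℝ) < 1 + x := by linarith
    have hcx : (0:ℝ) < c + x := by linarith
    have d1 : HasDerivAt (fun y : ℝ => Real.log (c+y)) (1/(c+x)) x :=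
      ((hasDerivAt_id x).const_add c).log hcx.ne'
    have d2 : HasDerivAt (fun y : ℝ => Real.log (1+y)) (1/(1+x)) x :=
      ((hasDerivAt_id x).const_add 1).log h1x.ne'
    have d3 : HasDerivAt (fun y : ℝ => (1+y)⁻¹) (-1/(1+x)^2) x := by
      simpa [Pi.inv_def] using ((hasDerivAt_id x).const_add 1).inv h1x.ne'
    have d4 : HasDerivAt (fun y : ℝ => (c+y)⁻¹) (-1/(c+x)^2) x := by
      simpa [Pi.inv_def] using ((hasDerivAt_id x).const_add c).inv hcx.ne'
    have D := (((d3.neg.sub d4).sub ((d2.sub d1).const_mul (2/(c-1)))).const_mul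
      (c^2/(c-1)^2))
    refine D.congr_deriv ?_
    field_simp
    ring
  have htend : Tendsto g atTop (nhds 0) := by
    have hld : Tendsto (fun y : ℝ => Real.log (1+y) - Real.log (c+y)) atTop (nhds 0) := by
      have := (log_diff_tendsto c hc).neg
      simp only [neg_zero] at this
      refine this.congr (fun y => by ring)
    have := ((inv_one_add_tendsto.neg.sub (inv_c_add_tendsto c)).sub
      (hld.const_mul (2/(c-1)))).const_mul (c^2/(c-1)^2)
    simpa using this
  have key := integral_Ioi_of_hasDerivAt_of_nonneg
    ((hderiv 0 self_mem_Ici).continuousAt.continuousWithinAt)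
    (fun x hx => hderiv x (le_of_lt (show (0:ℝ) < x from hx)))
    (fun x hx => by
      have hx0 : (0:ℝ) < x := hx
      have h1x : (0:ℝ) < 1 + x := by linarith
      have hcx : (0:ℝ) < c + x := by linarith
      have hc0 : (0:ℝ) < c := by linarith
      positivity)
    htend
  rw [key, hg]
  have hc0 : c ≠ 0 := by positivity
  have hlc : Real.log (1 + 0) = 0 := by norm_num
  simp only [add_zero, hlc, Real.log_one]
  field_simp
  ring

/-- For c > 1 and w = c/(c+F) with F ~ F(2,2) (density `1/(1+x)^2` on (0,∞)):
`E[w] = c(c - log c - 1)/(c-1)^2` and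
`Var(w) = c((c-1)^2 - c(log c)^2)/(c-1)^4`. -/
theorem mean_and_variance_softmax_output (c : ℝ) (hc : 1 < c) :
    (∫ x in Ioi (0 : ℝ), (c / (c + x)) * (1 / (1 + x) ^ 2)
        = c * (c - Real.log c - 1) / (c - 1) ^ 2) ∧
    ((∫ x in Ioi (0 : ℝ), (c / (c + x)) ^ 2 * (1 / (1 + x) ^ 2))
        - (∫ x in Ioi (0 : ℝ), (c / (c + x)) * (1 / (1 + x) ^ 2)) ^ 2
        = c * ((c - 1) ^ 2 - c * (Real.log c) ^ 2) / (c - 1) ^ 4) := by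
  refine ⟨first_integral c hc, ?_⟩
  rw [first_integral c hc, second_integral c hc]
  have hc3 : c - 1 ≠ 0 := by linarith
  field_simp
  ring
end

section
/- For all c > 1, the function c ↦ |c·log(c) - c + 1| / sqrt(c·((c-1)^2 - c·(log c)^2)) is bounded above by sqrt(3), and its limit as c → 1+ equals sqrt(3). -/
set_option maxHeartbeats 1000000

open Real Filter Set


noncomputable def P (A a b c d e k : ℝ) : ℝ → ℝ :=
  fun u => A * Real.exp (3*u) + (a + b*u + c*u^2) * Real.exp (2*u)
    + (d + e*u) * Real.exp u + k

noncomputable def h0 : ℝ → ℝ := P 3 (-7) 2 (-4) 5 (-2) (-1)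
noncomputable def h1 : ℝ → ℝ := P 9 (-12) (-4) (-8) 3 (-2) 0
noncomputable def h2 : ℝ → ℝ := P 27 (-28) (-24) (-16) 1 (-2) 0
noncomputable def h3 : ℝ → ℝ := P 81 (-80) (-80) (-32) (-1) (-2) 0
noncomputable def h4 : ℝ → ℝ := P 243 (-240) (-224) (-64) (-3) (-2) 0
noncomputable def h5 : ℝ → ℝ := P 729 (-704) (-576) (-128) (-5) (-2) 0

-- check derivative matching
example (u : ℝ) : True := trivial

lemma P_hasDerivAt (A a b c d e k u : ℝ) :
    HasDerivAt (P A a b c d e k) (P (3*A) (2*a+b) (2*b+2*c) (2*c) (d+e) e 0 u) u := by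
  have e3 : HasDerivAt (fun u : ℝ => Real.exp (3*u)) (3 * Real.exp (3*u)) u := by
    simpa [mul_comm] using (HasDerivAt.exp ((hasDerivAt_id u).const_mul 3))
  have e2 : HasDerivAt (fun u : ℝ => Real.exp (2*u)) (2 * Real.exp (2*u)) u := by
    simpa [mul_comm] using (HasDerivAt.exp ((hasDerivAt_id u).const_mul 2))
  have e1 : HasDerivAt (fun u : ℝ => Real.exp u) (Real.exp u) u := Real.hasDerivAt_exp u
  have p2 : HasDerivAt (fun u : ℝ => a + b*u + c*u^2) (b + c*(2*u)) u := by
    have hb : HasDerivAt (fun u : ℝ => b*u) b u := by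
      simpa using (hasDerivAt_id u).const_mul b
    have hc : HasDerivAt (fun u : ℝ => c*u^2) (c*(2*u)) u := by
      simpa using (hasDerivAt_pow 2 u).const_mul c
    exact (hb.const_add a).add hc
  have p1 : HasDerivAt (fun u : ℝ => d + e*u) e u := by
    simpa using ((hasDerivAt_id u).const_mul e).const_add d
  have t1 := (e3.const_mul A)
  have t2 := p2.mul e2
  have t3 := p1.mul e1
  have := ((t1.add t2).add t3).add_const k
  refine HasDerivAt.congr_deriv (f := P A a b c d e k) this ?_
  unfold P
  ring

lemma hd0 (u : ℝ) : HasDerivAt h0 (h1 u) u := by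
  have := P_hasDerivAt 3 (-7) 2 (-4) 5 (-2) (-1) u
  unfold h0 h1; convert this using 2 <;> norm_num

lemma hd1 (u : ℝ) : HasDerivAt h1 (h2 u) u := by
  have := P_hasDerivAt 9 (-12) (-4) (-8) 3 (-2) 0 u
  unfold h1 h2; convert this using 2 <;> norm_num

lemma hd2 (u : ℝ) : HasDerivAt h2 (h3 u) u := by
  have := P_hasDerivAt 27 (-28) (-24) (-16) 1 (-2) 0 u
  unfold h2 h3; convert this using 2 <;> norm_num

lemma hd3 (u : ℝ) : HasDerivAt h3 (h4 u) u := by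
  have := P_hasDerivAt 81 (-80) (-80) (-32) (-1) (-2) 0 u
  unfold h3 h4; convert this using 2 <;> norm_num

lemma hd4 (u : ℝ) : HasDerivAt h4 (h5 u) u := by
  have := P_hasDerivAt 243 (-240) (-224) (-64) (-3) (-2) 0 u
  unfold h4 h5; convert this using 2 <;> norm_num

lemma h5_nonneg (u : ℝ) (hu : 0 ≤ u) : 0 ≤ h5 u := by
  unfold h5 P
  have h1 : Real.exp u ≤ Real.exp (2*u) := Real.exp_le_exp.2 (by linarith)
  have h2 : (1 + u/2)^2 ≤ Real.exp u := by
    have := Real.add_one_le_exp (u/2)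
    have h0 : (0:ℝ) ≤ 1 + u/2 := by linarith
    calc (1 + u/2)^2 ≤ (Real.exp (u/2))^2 := by nlinarith [Real.exp_pos (u/2)]
      _ = Real.exp u := by rw [sq, ← Real.exp_add]; norm_num
  have h3 : Real.exp (3*u) = Real.exp u * Real.exp (2*u) := by
    rw [← Real.exp_add]; ring_nf
  have p1 := Real.exp_pos u
  have p2 := Real.exp_pos (2*u)
  rw [h3]
  nlinarith [mul_le_mul_of_nonneg_right h2 p2.le, mul_nonneg hu p2.le,
    mul_nonneg (mul_nonneg hu hu) p2.le]

noncomputable def M : ℝ := 729 * Real.exp 3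

lemma h5_le (u : ℝ) (hu : u ∈ Icc (0:ℝ) 1) : h5 u ≤ M := by
  obtain ⟨hu0, hu1⟩ := hu
  unfold h5 P M
  have p1 := Real.exp_pos u
  have p2 := Real.exp_pos (2*u)
  have h3 : Real.exp (3*u) ≤ Real.exp 3 := Real.exp_le_exp.2 (by linarith)
  nlinarith [mul_nonneg hu0 p2.le, mul_nonneg (mul_nonneg hu0 hu0) p2.le,
    mul_nonneg hu0 p1.le]

lemma hzero : h0 0 = 0 ∧ h1 0 = 0 ∧ h2 0 = 0 ∧ h3 0 = 0 ∧ h4 0 = 0 := by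
  unfold h0 h1 h2 h3 h4 P
  norm_num

lemma nonneg_of_deriv_Ici {f f' : ℝ → ℝ} (h0 : f 0 = 0)
    (hd : ∀ u, HasDerivAt f (f' u) u) (hp : ∀ u, 0 ≤ u → 0 ≤ f' u) :
    ∀ u, 0 ≤ u → 0 ≤ f u := by
  intro u hu
  have hm : MonotoneOn f (Ici 0) := by
    apply monotoneOn_of_deriv_nonneg (convex_Ici 0)
    · exact fun x _ => (hd x).differentiableAt.continuousAt.continuousWithinAt
    · exact fun x _ => (hd x).differentiableAt.differentiableWithinAt
    · intro x hx
      rw [interior_Ici] at hx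
      rw [(hd x).deriv]
      exact hp x hx.le
  have := hm self_mem_Ici hu hu
  rwa [h0] at this

lemma le_of_deriv_Icc {f g f' g' : ℝ → ℝ} (h0 : f 0 ≤ g 0)
    (hdf : ∀ u, HasDerivAt f (f' u) u) (hdg : ∀ u, HasDerivAt g (g' u) u)
    (hp : ∀ u ∈ Icc (0:ℝ) 1, f' u ≤ g' u) :
    ∀ u ∈ Icc (0:ℝ) 1, f u ≤ g u := by
  intro u hu
  have hm : MonotoneOn (fun x => g x - f x) (Icc 0 1) := by
    apply monotoneOn_of_deriv_nonneg (convex_Icc 0 1)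
    · exact fun x _ => ((hdg x).sub (hdf x)).differentiableAt.continuousAt.continuousWithinAt
    · exact fun x _ => ((hdg x).sub (hdf x)).differentiableAt.differentiableWithinAt
    · intro x hx
      rw [interior_Icc] at hx
      rw [show deriv (fun x => g x - f x) x = g' x - f' x from ((hdg x).sub (hdf x)).deriv]
      have := hp x ⟨hx.1.le, hx.2.le⟩
      linarith
  have := hm (left_mem_Icc.2 (by norm_num)) hu hu.1
  simp only at this
  linarith

lemma h0_nonneg : ∀ u, 0 ≤ u → 0 ≤ h0 u := by
  obtain ⟨z0, z1, z2, z3, z4⟩ := hzero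
  have n4 := nonneg_of_deriv_Ici z4 hd4 (fun u hu => h5_nonneg u hu)
  have n3 := nonneg_of_deriv_Ici z3 hd3 n4
  have n2 := nonneg_of_deriv_Ici z2 hd2 n3
  have n1 := nonneg_of_deriv_Ici z1 hd1 n2
  exact nonneg_of_deriv_Ici z0 hd0 n1

lemma h0_le : ∀ u ∈ Icc (0:ℝ) 1, h0 u ≤ M * u^5 := by
  obtain ⟨z0, z1, z2, z3, z4⟩ := hzero
  have g4 : ∀ u : ℝ, HasDerivAt (fun u : ℝ => M * u) M u := by
    intro u; simpa using (hasDerivAt_id u).const_mul M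
  have g3 : ∀ u : ℝ, HasDerivAt (fun u : ℝ => M * u^2) (M * (2*u)) u := by
    intro u; simpa [mul_comm, mul_assoc] using (hasDerivAt_pow 2 u).const_mul M
  have g2 : ∀ u : ℝ, HasDerivAt (fun u : ℝ => M * u^3) (M * (3*u^2)) u := by
    intro u; simpa [mul_comm, mul_assoc] using (hasDerivAt_pow 3 u).const_mul M
  have g1 : ∀ u : ℝ, HasDerivAt (fun u : ℝ => M * u^4) (M * (4*u^3)) u := by
    intro u; simpa [mul_comm, mul_assoc] using (hasDerivAt_pow 4 u).const_mul M
  have g0 : ∀ u : ℝ, HasDerivAt (fun u : ℝ => M * u^5) (M * (5*u^4)) u := by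
    intro u; simpa [mul_comm, mul_assoc] using (hasDerivAt_pow 5 u).const_mul M
  have hM : 0 ≤ M := by unfold M; positivity
  have b4 : ∀ u ∈ Icc (0:ℝ) 1, h4 u ≤ M * u := by
    apply le_of_deriv_Icc (by simp [z4]) hd4 g4
    intro u hu; exact h5_le u hu
  have b3 : ∀ u ∈ Icc (0:ℝ) 1, h3 u ≤ M * u^2 := by
    apply le_of_deriv_Icc (by simp [z3]) hd3 g3
    intro u hu
    calc h4 u ≤ M * u := b4 u hu
      _ ≤ M * (2*u) := by nlinarith [hu.1]
  have b2 : ∀ u ∈ Icc (0:ℝ) 1, h2 u ≤ M * u^3 := by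
    apply le_of_deriv_Icc (by simp [z2]) hd2 g2
    intro u hu
    calc h3 u ≤ M * u^2 := b3 u hu
      _ ≤ M * (3*u^2) := by nlinarith [sq_nonneg u]
  have b1 : ∀ u ∈ Icc (0:ℝ) 1, h1 u ≤ M * u^4 := by
    apply le_of_deriv_Icc (by simp [z1]) hd1 g1
    intro u hu
    calc h2 u ≤ M * u^3 := b2 u hu
      _ ≤ M * (4*u^3) := by nlinarith [pow_nonneg hu.1 3]
  apply le_of_deriv_Icc (by simp [z0]) hd0 g0
  intro u hu
  calc h1 u ≤ M * u^4 := b1 u hu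
    _ ≤ M * (5*u^4) := by nlinarith [pow_nonneg hu.1 4]

lemma key (c : ℝ) (hc : 1 < c) :
    0 < c * Real.log c - c + 1 ∧
    3 * (c * ((c - 1) ^ 2 - c * (Real.log c) ^ 2))
      - (c * Real.log c - c + 1) ^ 2 = h0 (Real.log c) := by
  have hc0 : (0:ℝ) < c := by linarith
  constructor
  · have h1 := Real.log_lt_sub_one_of_pos (inv_pos.2 hc0) (by
      intro h; rw [inv_eq_one] at h; linarith)
    rw [Real.log_inv] at h1
    have h2 : 1 - c⁻¹ < Real.log c := by linarith
    have h3 : c * (1 - c⁻¹) < c * Real.log c := by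
      exact (mul_lt_mul_iff_right₀ hc0).2 h2
    rw [mul_sub, mul_inv_cancel₀ (ne_of_gt hc0)] at h3
    linarith
  · have hexp : Real.exp (Real.log c) = c := Real.exp_log hc0
    have e2 : Real.exp (2 * Real.log c) = c ^ 2 := by
      rw [show (2:ℝ) * Real.log c = Real.log c + Real.log c by ring, Real.exp_add, hexp]
      ring
    have e3 : Real.exp (3 * Real.log c) = c ^ 3 := by
      rw [show (3:ℝ) * Real.log c = Real.log c + (Real.log c + Real.log c) by ring,
        Real.exp_add, Real.exp_add, hexp]
      ring
    unfold h0 P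
    rw [e2, e3, hexp]
    ring

lemma Epos (c : ℝ) (hc : 1 < c) : 0 < c * ((c - 1) ^ 2 - c * (Real.log c) ^ 2) := by
  obtain ⟨hN, heq⟩ := key c hc
  have hh := h0_nonneg (Real.log c) (Real.log_nonneg (by linarith))
  nlinarith

lemma ratio_eq (c : ℝ) (hc : 1 < c) :
    |c * Real.log c - c + 1| / Real.sqrt (c * ((c - 1) ^ 2 - c * (Real.log c) ^ 2))
      = Real.sqrt ((c * Real.log c - c + 1) ^ 2
          / (c * ((c - 1) ^ 2 - c * (Real.log c) ^ 2))) := by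
  rw [Real.sqrt_div (sq_nonneg _), Real.sqrt_sq_eq_abs]

lemma Q_le (c : ℝ) (hc : 1 < c) :
    (c * Real.log c - c + 1) ^ 2 / (c * ((c - 1) ^ 2 - c * (Real.log c) ^ 2)) ≤ 3 := by
  obtain ⟨hN, heq⟩ := key c hc
  have hE := Epos c hc
  rw [div_le_iff₀ hE]
  have hh := h0_nonneg (Real.log c) (Real.log_nonneg (by linarith))
  nlinarith

lemma Q_ge (c : ℝ) (hc : 1 < c) (hc2 : c < 2) :
    3 - 108 * M * (c - 1)
      ≤ (c * Real.log c - c + 1) ^ 2 / (c * ((c - 1) ^ 2 - c * (Real.log c) ^ 2)) := by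
  obtain ⟨hN, heq⟩ := key c hc
  have hE := Epos c hc
  have hc0 : (0:ℝ) < c := by linarith
  set L := Real.log c with hL
  have hL0 : 0 ≤ L := Real.log_nonneg (by linarith)
  have hL1 : L ≤ c - 1 := by
    have := Real.log_le_sub_one_of_pos hc0; linarith
  have hLmem : L ∈ Icc (0:ℝ) 1 := ⟨hL0, by linarith⟩
  -- lower bound on N
  set s := Real.sqrt c with hs
  have hs2 : s^2 = c := Real.sq_sqrt hc0.le
  have hs1 : 1 < s := by
    nlinarith [Real.sqrt_nonneg c]
  have hlogs : Real.log s ≥ 1 - s⁻¹ := by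
    have h1 := Real.log_le_sub_one_of_pos (inv_pos.2 (by linarith : (0:ℝ) < s))
    rw [Real.log_inv] at h1
    linarith
  have hLs : L = 2 * Real.log s := by
    rw [hL, ← hs2, Real.log_pow]
    push_cast; ring
  have hsL : s * L ≥ 2 * (s - 1) := by
    have h1 : s * Real.log s ≥ s * (1 - s⁻¹) := by
      have : (0:ℝ) < s := by linarith
      nlinarith
    rw [mul_sub, mul_inv_cancel₀ (by linarith : s ≠ 0)] at h1
    rw [hLs]
    nlinarith
  have hNlb : (s - 1)^2 ≤ c * L - c + 1 := by
    have h1 : s * (s * L) ≥ s * (2 * (s-1)) := by nlinarith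
    nlinarith
  have hs32 : s < 3/2 := by nlinarith [hs2]
  have hN6 : (c - 1)^2 ≤ 6 * (c * L - c + 1) := by
    have h1 : (c - 1)^2 = (s-1)^2 * (s+1)^2 := by nlinarith [hs2]
    have h2 : (s+1)^2 ≤ 6 := by nlinarith [hs2]
    have h3 : (s-1)^2 * (s+1)^2 ≤ (s-1)^2 * 6 :=
      mul_le_mul_of_nonneg_left h2 (sq_nonneg _)
    linarith
  have hub : h0 L ≤ M * (c-1)^5 := by
    calc h0 L ≤ M * L^5 := h0_le L hLmem
      _ ≤ M * (c-1)^5 := by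
          have hM : 0 ≤ M := by unfold M; positivity
          have := pow_le_pow_left₀ hL0 hL1 5
          nlinarith
  have hh : 0 ≤ h0 L := h0_nonneg L hL0
  have hM : (0:ℝ) ≤ M := by unfold M; positivity
  set E := c * ((c - 1) ^ 2 - c * L ^ 2) with hEdef
  set N := c * L - c + 1 with hNdef
  have hE3 : N ^ 2 ≤ 3 * E := by nlinarith
  have h4le : (c-1)^4 ≤ 36 * N^2 := by
    have := pow_le_pow_left₀ (sq_nonneg (c-1)) hN6 2
    nlinarith
  have hElb : (c - 1)^4 / 108 ≤ E := by linarith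
  have key2 : 3 * E - N ^ 2 ≤ 108 * M * (c - 1) * E := by
    have h1 : M * (c-1) * ((c-1)^4/108) ≤ M * (c-1) * E :=
      mul_le_mul_of_nonneg_left hElb (by nlinarith)
    nlinarith
  rw [le_div_iff₀ hE]
  nlinarith

/-- The bias-to-standard-deviation ratio
`|c·log c - c + 1| / sqrt(c((c-1)^2 - c(log c)^2))` is bounded above by `√3`
on `(1,∞)`, and tends to `√3` as `c → 1⁺`. -/
theorem ratio_le_sqrt_three :
    (∀ c : ℝ, 1 < c →
      |c * Real.log c - c + 1| / Real.sqrt (c * ((c - 1) ^ 2 - c * (Real.log c) ^ 2))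
        ≤ Real.sqrt 3) ∧
    Tendsto
      (fun c : ℝ =>
        |c * Real.log c - c + 1| / Real.sqrt (c * ((c - 1) ^ 2 - c * (Real.log c) ^ 2)))
      (nhdsWithin 1 (Ioi 1)) (nhds (Real.sqrt 3)) := by
  constructor
  · intro c hc
    rw [ratio_eq c hc]
    exact Real.sqrt_le_sqrt (Q_le c hc)
  · have hQt : Filter.Tendsto
        (fun c : ℝ => (c * Real.log c - c + 1) ^ 2
          / (c * ((c - 1) ^ 2 - c * (Real.log c) ^ 2)))
        (nhdsWithin 1 (Ioi 1)) (nhds 3) := by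
      apply tendsto_of_tendsto_of_tendsto_of_le_of_le'
        (g := fun c : ℝ => 3 - 108 * M * (c - 1)) (h := fun _ : ℝ => (3:ℝ))
      · have hcont : Continuous fun c : ℝ => 3 - 108 * M * (c - 1) := by continuity
        have := (hcont.tendsto 1).mono_left (nhdsWithin_le_nhds (s := Ioi 1))
        simpa using this
      · exact tendsto_const_nhds
      · filter_upwards [Ioo_mem_nhdsGT_of_mem
          (⟨le_refl (1:ℝ), one_lt_two⟩ : (1:ℝ) ∈ Ico (1:ℝ) 2)] with c hc
        exact Q_ge c hc.1 hc.2
      · filter_upwards [self_mem_nhdsWithin] with c hc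
        exact Q_le c hc
    have hs := (Real.continuous_sqrt.tendsto 3).comp hQt
    apply hs.congr'
    filter_upwards [self_mem_nhdsWithin] with c hc
    exact (ratio_eq c hc).symm
end

section
/- For all c > 1, one has |c·log(c) - c + 1| / sqrt(c·((c-1)^2 - c·(log c)^2)) ≥ (log(c) - 1)/sqrt(c). -/
open Real

/-- For c > 1, `|c·log c - c + 1| / sqrt(c((c-1)^2 - c(log c)^2)) ≥ (log c - 1)/√c`. -/
theorem ratio_lower_bound (c : ℝ) (hc : 1 < c) :
    (Real.log c - 1) / Real.sqrt c
      ≤ |c * Real.log c - c + 1| / Real.sqrt (c * ((c - 1) ^ 2 - c * (Real.log c) ^ 2)) := by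
  have hc0 : (0:ℝ) < c := by linarith
  set L := Real.log c with hLdef
  by_cases hL : L ≤ 1
  · calc (L - 1) / Real.sqrt c ≤ 0 :=
          div_nonpos_of_nonpos_of_nonneg (by linarith) (Real.sqrt_nonneg _)
      _ ≤ _ := div_nonneg (abs_nonneg _) (Real.sqrt_nonneg _)
  · push_neg at hL
    have hs0 : (0:ℝ) < Real.sqrt c := Real.sqrt_pos.mpr hc0
    have hsq : Real.sqrt c * Real.sqrt c = c := Real.mul_self_sqrt hc0.le
    have hu0 : 0 < L / 2 := by
      have : (0:ℝ) < L := lt_trans one_pos hL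
      linarith
    have hsinh := Real.self_lt_sinh_iff.mpr hu0
    have hlogs : Real.log (Real.sqrt c) = L / 2 := Real.log_sqrt hc0.le
    have hexp1 : Real.exp (L / 2) = Real.sqrt c := by
      rw [← hlogs, Real.exp_log hs0]
    have hexp2 : Real.exp (-(L / 2)) = 1 / Real.sqrt c := by
      rw [Real.exp_neg, hexp1, one_div]
    have hkey : L < Real.sqrt c - 1 / Real.sqrt c := by
      have := hsinh
      rw [Real.sinh_eq, hexp1, hexp2] at this
      linarith
    -- positivity of the inner expression
    have hD : 0 < (c - 1) ^ 2 - c * L ^ 2 := by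
      have hL0 : (0:ℝ) < L := lt_trans one_pos hL
      have h1 : L ^ 2 < (Real.sqrt c - 1 / Real.sqrt c) ^ 2 := by
        have hpos : 0 < Real.sqrt c - 1 / Real.sqrt c := lt_trans hL0 hkey
        nlinarith
      have h2 : c * (Real.sqrt c - 1 / Real.sqrt c) ^ 2 = (c - 1) ^ 2 := by
        field_simp
        rw [Real.sq_sqrt hc0.le]
      nlinarith
    have hcD : 0 < c * ((c - 1) ^ 2 - c * L ^ 2) := mul_pos hc0 hD
    have hsD : 0 < Real.sqrt (c * ((c - 1) ^ 2 - c * L ^ 2)) := Real.sqrt_pos.mpr hcD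
    have habs : |c * L - c + 1| = c * L - c + 1 := by
      apply abs_of_pos; nlinarith
    rw [habs, div_le_div_iff₀ hs0 hsD, Real.sqrt_mul hc0.le]
    have hmain : (L - 1) * Real.sqrt ((c - 1) ^ 2 - c * L ^ 2) ≤ c * L - c + 1 := by
      have h1 : (L - 1) * Real.sqrt ((c - 1) ^ 2 - c * L ^ 2)
          = Real.sqrt ((L - 1) ^ 2 * ((c - 1) ^ 2 - c * L ^ 2)) := by
        rw [Real.sqrt_mul (sq_nonneg _), Real.sqrt_sq (by linarith : (0:ℝ) ≤ L - 1)]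
      rw [h1]
      have h2 : (L - 1) ^ 2 * ((c - 1) ^ 2 - c * L ^ 2) ≤ (c * L - c + 1) ^ 2 := by
        nlinarith [sq_nonneg (L - 1), sq_nonneg L, mul_pos hc0 (mul_pos (by linarith : (0:ℝ) < L - 1) (by linarith : (0:ℝ) < L - 1))]
      calc Real.sqrt ((L - 1) ^ 2 * ((c - 1) ^ 2 - c * L ^ 2))
          ≤ Real.sqrt ((c * L - c + 1) ^ 2) := Real.sqrt_le_sqrt h2
        _ = c * L - c + 1 := Real.sqrt_sq (by nlinarith)
    nlinarith [Real.sqrt_nonneg ((c - 1) ^ 2 - c * L ^ 2), hs0, hmain,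
      mul_le_mul_of_nonneg_right hmain hs0.le]
end

section
/- For all c > 1, log(c) · (-2c + c·(log c)^3 - 2c·(log c)^2 + (3c-1)·log(c) + 2) ≥ 0. -/
open Real Set

private noncomputable def gfun (t : ℝ) : ℝ := Real.exp t * (t^3 - 2*t^2 + 3*t - 2) + 2 - t

private lemma gfun_hasDeriv (t : ℝ) :
    HasDerivAt gfun (Real.exp t * (t^3 + t^2 - t + 1) - 1) t := by
  have h2 : HasDerivAt (fun t : ℝ => t^3 - 2*t^2 + 3*t - 2) (3*t^2 - 4*t + 3) t := by
    have := ((hasDerivAt_pow 3 t).sub ((hasDerivAt_pow 2 t).const_mul 2)).add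
      (((hasDerivAt_id t).const_mul 3).sub_const 2)
    convert this using 1
    · rfl
    · rfl
    · ext x; simp; ring
    · push_cast; ring
  have h := (((Real.hasDerivAt_exp t).mul h2).add_const 2).sub (hasDerivAt_id t)
  convert h using 1
  · rfl
  · rfl
  · rfl
  ring

private lemma gfun_nonneg {t : ℝ} (ht : 0 ≤ t) : 0 ≤ gfun t := by
  have hmono : MonotoneOn gfun (Ici (0:ℝ)) := by
    apply monotoneOn_of_deriv_nonneg (convex_Ici 0)
    · exact Continuous.continuousOn (by
        have : Continuous gfun := by
          unfold gfun; continuity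
        exact this)
    · intro x _
      exact (gfun_hasDeriv x).differentiableAt.differentiableWithinAt
    · intro x hx
      rw [interior_Ici] at hx
      rw [(gfun_hasDeriv x).deriv]
      have hx0 : (0:ℝ) ≤ x := le_of_lt hx
      have hexp' : 1 + x ≤ Real.exp x := by linarith [Real.add_one_le_exp x]
      have hpoly : 0 ≤ x^3 + x^2 - x + 1 := by nlinarith [sq_nonneg (x - 1/2), pow_nonneg hx0 3]
      nlinarith [mul_le_mul_of_nonneg_right hexp' hpoly, pow_nonneg hx0 3, pow_nonneg hx0 4]
  have h0 : gfun 0 = 0 := by simp [gfun]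
  have := hmono (self_mem_Ici) (mem_Ici.mpr ht) ht
  linarith [h0 ▸ this]

/-- For all c > 1,
`log c · (-2c + c(log c)^3 - 2c(log c)^2 + (3c-1)·log c + 2) ≥ 0`. -/
theorem log_mul_f_nonneg (c : ℝ) (hc : 1 < c) :
    0 ≤ Real.log c *
      (-2 * c + c * (Real.log c) ^ 3 - 2 * c * (Real.log c) ^ 2
        + (3 * c - 1) * Real.log c + 2) := by
  have hL : 0 ≤ Real.log c := Real.log_nonneg hc.le
  have hg := gfun_nonneg hL
  have hel : Real.exp (Real.log c) = c := Real.exp_log (by linarith)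
  unfold gfun at hg
  rw [hel] at hg
  apply mul_nonneg hL
  nlinarith [hg]
end

section
/- The function g(c) = log((c·log(c) - c + 1)^2/(c-1)^4) / log(c·((c-1)^2 - c·(log c)^2)/(c-1)^4) satisfies lim_{c→1+} g(c) = log(4)/log(12) and lim_{c→∞} g(c) = 2. -/
open Real Filter Set

section helpers

lemma pos1 {c : ℝ} (hc : 1 < c) : 0 < c * Real.log c - c + 1 := by
  have h := Real.log_lt_sub_one_of_pos (x := 1/c) (by positivity) (by
    intro h; rw [div_eq_one_iff_eq (by linarith)] at h; linarith)
  rw [one_div, Real.log_inv] at h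
  have hc0 : (0:ℝ) < c := by linarith
  have h1 : 1 - c⁻¹ < Real.log c := by linarith
  have h2 : c * (1 - c⁻¹) < c * Real.log c := mul_lt_mul_of_pos_left h1 hc0
  rw [mul_sub, mul_inv_cancel₀ (ne_of_gt hc0)] at h2
  linarith

lemma deriv_aux {c : ℝ} (hc : 1 < c) :
    0 < 2*(c-1) - (Real.log c)^2 - 2*Real.log c := by
  set g : ℝ → ℝ := fun x => 2*(x-1) - (Real.log x)^2 - 2*Real.log x with hg
  have hmono : StrictMonoOn g (Ici 1) := by
    apply strictMonoOn_of_deriv_pos (convex_Ici 1)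
    · apply ContinuousOn.sub (ContinuousOn.sub (by fun_prop) ?_) ?_
      · exact (Real.continuousOn_log.mono (by intro x hx; simp at hx ⊢; linarith)).pow 2
      · exact ((Real.continuousOn_log.mono (by intro x hx; simp at hx ⊢; linarith))).const_smul 2 |>.congr (by intro x hx; simp [smul_eq_mul])
    · intro x hx
      rw [interior_Ici] at hx
      have hx1 : (1:ℝ) < x := hx
      have hx0 : (0:ℝ) < x := by linarith
      have hd : HasDerivAt g (2 - 2*Real.log x * x⁻¹ - 2*x⁻¹) x := by
        have h1 : HasDerivAt (fun x : ℝ => 2*(x-1)) 2 x := by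
          simpa using ((hasDerivAt_id x).sub_const 1).const_mul 2
        have h2 : HasDerivAt (fun x : ℝ => (Real.log x)^2) (2*Real.log x * x⁻¹) x := by
          simpa using ((Real.hasDerivAt_log (ne_of_gt hx0)).fun_pow 2)
        have h3 : HasDerivAt (fun x : ℝ => 2*Real.log x) (2*x⁻¹) x := by
          simpa using (Real.hasDerivAt_log (ne_of_gt hx0)).const_mul 2
        exact (h1.sub h2).sub h3
      rw [hd.deriv]
      have hlog : Real.log x < x - 1 := Real.log_lt_sub_one_of_pos hx0 (by linarith)
      have : 2 - 2*Real.log x * x⁻¹ - 2*x⁻¹ = 2*(x - 1 - Real.log x)/x := by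
        field_simp; ring
      rw [this]; exact div_pos (by linarith) hx0
  have := hmono (self_mem_Ici) (le_of_lt (show (1:ℝ) < c from hc) |> fun h => mem_Ici.mpr h) hc
  simpa [hg] using this

lemma pos2 {c : ℝ} (hc : 1 < c) : 0 < (c-1)^2 - c * (Real.log c)^2 := by
  set f : ℝ → ℝ := fun x => (x-1)^2 - x*(Real.log x)^2 with hf
  have hmono : StrictMonoOn f (Ici 1) := by
    apply strictMonoOn_of_deriv_pos (convex_Ici 1)
    · apply ContinuousOn.sub (by fun_prop)
      exact continuousOn_id.mul ((Real.continuousOn_log.mono (by intro x hx; simp at hx ⊢; linarith)).pow 2)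
    · intro x hx
      rw [interior_Ici] at hx
      have hx1 : (1:ℝ) < x := hx
      have hx0 : (0:ℝ) < x := by linarith
      have hd : HasDerivAt f (2*(x-1) - ((Real.log x)^2 + x * (2*Real.log x * x⁻¹))) x := by
        have h1 : HasDerivAt (fun x : ℝ => (x-1)^2) (2*(x-1)) x := by
          simpa using ((hasDerivAt_id x).sub_const 1).fun_pow 2
        have h2 : HasDerivAt (fun x : ℝ => x*(Real.log x)^2)
            (1*(Real.log x)^2 + x * (2*Real.log x * x⁻¹)) x := by
          exact (hasDerivAt_id x).mul ((Real.hasDerivAt_log (ne_of_gt hx0)).pow 2 |>.congr_deriv (by ring))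
        simpa using h1.fun_sub h2
      rw [hd.deriv]
      have key := deriv_aux hx1
      have : (Real.log x)^2 + x*(2*Real.log x*x⁻¹) = (Real.log x)^2 + 2*Real.log x := by
        field_simp
      rw [this]; linarith
  have := hmono self_mem_Ici (mem_Ici.mpr (le_of_lt hc)) hc
  simpa [hf] using this

lemma log_taylor_bound {e : ℝ} (h0 : 0 < e) (h1 : e ≤ 1/2) :
    |Real.log (1+e) - (e - e^2/2 + e^3/3 - e^4/4)| ≤ 2*e^5 := by
  have hx : |(-e)| < 1 := by rw [abs_neg, abs_of_pos h0]; linarith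
  have h := Real.abs_log_sub_add_sum_range_le hx 4
  have hs : (∑ i ∈ Finset.range 4, (-e) ^ (i + 1) / ((i:ℝ) + 1))
      = -(e - e^2/2 + e^3/3 - e^4/4) := by
    simp [Finset.sum_range_succ]; ring
  rw [hs, abs_neg, abs_of_pos h0] at h
  have h2 : (1:ℝ) - -e = 1 + e := by ring
  rw [h2] at h
  have h3 : -(e - e^2/2 + e^3/3 - e^4/4) + Real.log (1+e)
      = Real.log (1+e) - (e - e^2/2 + e^3/3 - e^4/4) := by ring
  rw [h3] at h
  have h4 : e^5/(1-e) ≤ 2*e^5 := by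
    rw [div_le_iff₀ (by linarith)]
    nlinarith [pow_pos h0 5]
  linarith

lemma tb' {c : ℝ} (hc1 : 1 < c) (hc2 : c ≤ 3/2) :
    |Real.log c - ((c-1) - (c-1)^2/2 + (c-1)^3/3 - (c-1)^4/4)| ≤ 2*(c-1)^5 := by
  have := log_taylor_bound (e := c-1) (by linarith) (by linarith)
  have hce : 1 + (c-1) = c := by ring
  rwa [hce] at this

lemma limit_L1 : Tendsto (fun c : ℝ => (c * Real.log c - c + 1)/(c-1)^2)
    (nhdsWithin 1 (Ioi 1)) (nhds (1/2)) := by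
  have hmem : Ioc (1:ℝ) (3/2) ∈ nhdsWithin (1:ℝ) (Ioi 1) :=
    Ioc_mem_nhdsGT_of_mem (by norm_num)
  have hlo : Tendsto (fun c : ℝ => 1/2 - (c-1)/6 + (c-1)^2/12 - (9/4)*(c-1)^3 - 2*(c-1)^4)
      (nhdsWithin 1 (Ioi 1)) (nhds (1/2)) := by
    have hcont : Continuous (fun c : ℝ => 1/2 - (c-1)/6 + (c-1)^2/12 - (9/4)*(c-1)^3 - 2*(c-1)^4) := by
      fun_prop
    have := (hcont.tendsto 1).mono_left (nhdsWithin_le_nhds (s := Ioi (1:ℝ)))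
    convert this using 2; norm_num
  have hhi : Tendsto (fun c : ℝ => 1/2 - (c-1)/6 + (c-1)^2/12 + (7/4)*(c-1)^3 + 2*(c-1)^4)
      (nhdsWithin 1 (Ioi 1)) (nhds (1/2)) := by
    have hcont : Continuous (fun c : ℝ => 1/2 - (c-1)/6 + (c-1)^2/12 + (7/4)*(c-1)^3 + 2*(c-1)^4) := by
      fun_prop
    have := (hcont.tendsto 1).mono_left (nhdsWithin_le_nhds (s := Ioi (1:ℝ)))
    convert this using 2; norm_num
  apply tendsto_of_tendsto_of_tendsto_of_le_of_le' hlo hhi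
  · filter_upwards [hmem] with c hc
    obtain ⟨hc1, hc2⟩ := hc
    have hc0 : (0:ℝ) < c := by linarith
    have htb := abs_le.mp (tb' hc1 hc2)
    rw [le_div_iff₀ (pow_pos (by linarith : (0:ℝ) < c - 1) 2)]
    have key : c * (((c-1) - (c-1)^2/2 + (c-1)^3/3 - (c-1)^4/4) - 2*(c-1)^5) ≤ c * Real.log c :=
      mul_le_mul_of_nonneg_left (by linarith [htb.1]) hc0.le
    nlinarith [key]
  · filter_upwards [hmem] with c hc
    obtain ⟨hc1, hc2⟩ := hc
    have hc0 : (0:ℝ) < c := by linarith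
    have htb := abs_le.mp (tb' hc1 hc2)
    rw [div_le_iff₀ (pow_pos (by linarith : (0:ℝ) < c - 1) 2)]
    have key : c * Real.log c ≤ c * (((c-1) - (c-1)^2/2 + (c-1)^3/3 - (c-1)^4/4) + 2*(c-1)^5) :=
      mul_le_mul_of_nonneg_left (by linarith [htb.2]) hc0.le
    nlinarith [key]

lemma limit_L2 : Tendsto (fun c : ℝ => ((c-1)^2 - c * (Real.log c)^2)/(c-1)^4)
    (nhdsWithin 1 (Ioi 1)) (nhds (1/12)) := by
  have hmem : Ioc (1:ℝ) (3/2) ∈ nhdsWithin (1:ℝ) (Ioi 1) :=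
    Ioc_mem_nhdsGT_of_mem (by norm_num)
  have hlo : Tendsto (fun c : ℝ => 1/12 - (c-1)/12 - (127/36)*(c-1)^2 - (79/36)*(c-1)^3
      + (37/48)*(c-1)^4 - (19/48)*(c-1)^5 - 3*(c-1)^6 - 4*(c-1)^7)
      (nhdsWithin 1 (Ioi 1)) (nhds (1/12)) := by
    have hcont : Continuous (fun c : ℝ => 1/12 - (c-1)/12 - (127/36)*(c-1)^2 - (79/36)*(c-1)^3
        + (37/48)*(c-1)^4 - (19/48)*(c-1)^5 - 3*(c-1)^6 - 4*(c-1)^7) := by fun_prop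
    have := (hcont.tendsto 1).mono_left (nhdsWithin_le_nhds (s := Ioi (1:ℝ)))
    convert this using 2; norm_num
  have hhi : Tendsto (fun c : ℝ => 1/12 - (c-1)/12 + (161/36)*(c-1)^2 + (65/36)*(c-1)^3
      - (9/16)*(c-1)^4 + (13/48)*(c-1)^5 - 5*(c-1)^6 - 4*(c-1)^7)
      (nhdsWithin 1 (Ioi 1)) (nhds (1/12)) := by
    have hcont : Continuous (fun c : ℝ => 1/12 - (c-1)/12 + (161/36)*(c-1)^2 + (65/36)*(c-1)^3
        - (9/16)*(c-1)^4 + (13/48)*(c-1)^5 - 5*(c-1)^6 - 4*(c-1)^7) := by fun_prop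
    have := (hcont.tendsto 1).mono_left (nhdsWithin_le_nhds (s := Ioi (1:ℝ)))
    convert this using 2; norm_num
  apply tendsto_of_tendsto_of_tendsto_of_le_of_le' hlo hhi
  · filter_upwards [hmem] with c hc
    obtain ⟨hc1, hc2⟩ := hc
    have hc0 : (0:ℝ) < c := by linarith
    have htb := abs_le.mp (tb' hc1 hc2)
    have hL0 : 0 ≤ Real.log c := Real.log_nonneg (by linarith)
    have hLle : Real.log c ≤ ((c-1) - (c-1)^2/2 + (c-1)^3/3 - (c-1)^4/4) + 2*(c-1)^5 := by
      linarith [htb.2]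
    have hsq : (Real.log c)^2 ≤ (((c-1) - (c-1)^2/2 + (c-1)^3/3 - (c-1)^4/4) + 2*(c-1)^5)^2 := by
      nlinarith [hL0, hLle]
    have key : c * (Real.log c)^2
        ≤ c * (((c-1) - (c-1)^2/2 + (c-1)^3/3 - (c-1)^4/4) + 2*(c-1)^5)^2 :=
      mul_le_mul_of_nonneg_left hsq hc0.le
    rw [le_div_iff₀ (pow_pos (by linarith : (0:ℝ) < c - 1) 4)]
    nlinarith [key]
  · filter_upwards [hmem] with c hc
    obtain ⟨hc1, hc2⟩ := hc
    have hc0 : (0:ℝ) < c := by linarith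
    have htb := abs_le.mp (tb' hc1 hc2)
    have hP4pos : 0 ≤ ((c-1) - (c-1)^2/2 + (c-1)^3/3 - (c-1)^4/4) - 2*(c-1)^5 := by
      nlinarith [pow_pos (by linarith : (0:ℝ) < c-1) 2, pow_pos (by linarith : (0:ℝ) < c-1) 3,
        pow_pos (by linarith : (0:ℝ) < c-1) 4, pow_pos (by linarith : (0:ℝ) < c-1) 5]
    have hLge : ((c-1) - (c-1)^2/2 + (c-1)^3/3 - (c-1)^4/4) - 2*(c-1)^5 ≤ Real.log c := by
      linarith [htb.1]
    have hsq : (((c-1) - (c-1)^2/2 + (c-1)^3/3 - (c-1)^4/4) - 2*(c-1)^5)^2 ≤ (Real.log c)^2 := by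
      nlinarith [hP4pos, hLge]
    have key : c * (((c-1) - (c-1)^2/2 + (c-1)^3/3 - (c-1)^4/4) - 2*(c-1)^5)^2
        ≤ c * (Real.log c)^2 := mul_le_mul_of_nonneg_left hsq hc0.le
    rw [div_le_iff₀ (pow_pos (by linarith : (0:ℝ) < c - 1) 4)]
    nlinarith [key]


lemma part1 : Tendsto
      (fun c : ℝ =>
        Real.log ((c * Real.log c - c + 1) ^ 2 / (c - 1) ^ 4) /
          Real.log (c * ((c - 1) ^ 2 - c * (Real.log c) ^ 2) / (c - 1) ^ 4))
      (nhdsWithin 1 (Ioi 1)) (nhds (Real.log 4 / Real.log 12)) := by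
  have hfun : (fun c : ℝ =>
        Real.log ((c * Real.log c - c + 1) ^ 2 / (c - 1) ^ 4) /
          Real.log (c * ((c - 1) ^ 2 - c * (Real.log c) ^ 2) / (c - 1) ^ 4))
      = (fun c : ℝ =>
        Real.log (((c * Real.log c - c + 1) / (c - 1) ^ 2) ^ 2) /
          Real.log (c * (((c - 1) ^ 2 - c * (Real.log c) ^ 2) / (c - 1) ^ 4))) := by
    funext c
    rw [div_pow, ← pow_mul, mul_div_assoc]
  rw [hfun]
  have hid : Tendsto (fun c : ℝ => c) (nhdsWithin 1 (Ioi 1)) (nhds 1) :=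
    (continuous_id.tendsto 1).mono_left nhdsWithin_le_nhds
  have hnum : Tendsto (fun c : ℝ => Real.log (((c * Real.log c - c + 1) / (c - 1) ^ 2) ^ 2))
      (nhdsWithin 1 (Ioi 1)) (nhds (Real.log (((1:ℝ)/2)^2))) :=
    ((Real.continuousAt_log (by norm_num)).tendsto.comp (limit_L1.pow 2))
  have hden : Tendsto (fun c : ℝ => Real.log (c * (((c - 1) ^ 2 - c * (Real.log c) ^ 2) / (c - 1) ^ 4)))
      (nhdsWithin 1 (Ioi 1)) (nhds (Real.log (1 * ((1:ℝ)/12)))) :=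
    ((Real.continuousAt_log (by norm_num)).tendsto.comp (hid.mul limit_L2))
  have := hnum.div hden (by
    rw [show (1:ℝ) * (1/12) = 12⁻¹ by norm_num, Real.log_inv]
    simp only [ne_eq, neg_eq_zero]
    exact ne_of_gt (Real.log_pos (by norm_num)))
  convert this using 2
  · rfl
  rw [show ((1:ℝ)/2)^2 = (4:ℝ)⁻¹ by norm_num, show (1:ℝ) * (1/12) = (12:ℝ)⁻¹ by norm_num,
    Real.log_inv, Real.log_inv, neg_div_neg_eq]


-- log log c / log c → 0
lemma h_loglog : Tendsto (fun c : ℝ => Real.log (Real.log c) / Real.log c) atTop (nhds 0) :=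
  (Real.isLittleO_log_id_atTop.tendsto_div_nhds_zero).comp Real.tendsto_log_atTop

-- log(c-1)/log c → 1
lemma h_sub1 : Tendsto (fun c : ℝ => Real.log (c - 1) / Real.log c) atTop (nhds 1) := by
  have tinv : Tendsto (fun c : ℝ => c⁻¹) atTop (nhds 0) := tendsto_inv_atTop_zero
  have t0 : Tendsto (fun c : ℝ => 1 - c⁻¹) atTop (nhds 1) := by
    simpa using tendsto_const_nhds.sub tinv
  have t1 : Tendsto (fun c : ℝ => Real.log (1 - c⁻¹)) atTop (nhds 0) := by
    have := (Real.continuousAt_log (by norm_num : (1:ℝ) ≠ 0)).tendsto.comp t0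
    simpa [Function.comp_def] using this
  have t2 : Tendsto (fun c : ℝ => 1 + Real.log (1 - c⁻¹) / Real.log c) atTop (nhds 1) := by
    simpa using tendsto_const_nhds.add (t1.div_atTop Real.tendsto_log_atTop)
  apply t2.congr'
  filter_upwards [eventually_gt_atTop (1:ℝ)] with c hc
  have hc0 : (0:ℝ) < c := by linarith
  have h1 : (0:ℝ) < 1 - c⁻¹ := by
    rw [sub_pos, inv_lt_one_iff₀]; right; exact hc
  have hlogc : Real.log c ≠ 0 := ne_of_gt (Real.log_pos hc)
  have : c - 1 = c * (1 - c⁻¹) := by field_simp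
  rw [this, Real.log_mul (ne_of_gt hc0) (ne_of_gt h1), add_div, div_self hlogc]

-- log(c log c - c + 1)/log c → 1
lemma h_N1 : Tendsto (fun c : ℝ => Real.log (c * Real.log c - c + 1) / Real.log c) atTop (nhds 1) := by
  have hsq : Tendsto (fun c : ℝ => Real.log (Real.log c - 1 + c⁻¹) / Real.log c) atTop (nhds 0) := by
    apply tendsto_of_tendsto_of_tendsto_of_le_of_le' tendsto_const_nhds h_loglog
    · filter_upwards [eventually_ge_atTop (8:ℝ)] with c hc
      have hc1 : (1:ℝ) < c := by linarith
      have hlogc : (2:ℝ) ≤ Real.log c := by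
        have he : Real.exp 2 < 8 := by
          have h9 := Real.exp_one_lt_d9
          calc Real.exp 2 = Real.exp 1 * Real.exp 1 := by
                rw [← Real.exp_add]; norm_num
            _ < 2.7182818286 * 2.7182818286 := by nlinarith [Real.exp_pos 1]
            _ < 8 := by norm_num
        calc (2:ℝ) = Real.log (Real.exp 2) := (Real.log_exp 2).symm
          _ ≤ Real.log c := Real.log_le_log (Real.exp_pos 2) (by linarith)
      have hu1 : (1:ℝ) ≤ Real.log c - 1 + c⁻¹ := by
        have : (0:ℝ) < c⁻¹ := by positivity
        linarith
      have h0 := Real.log_nonneg hu1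
      exact div_nonneg h0 (by linarith)
    · filter_upwards [eventually_ge_atTop (8:ℝ)] with c hc
      have hc1 : (1:ℝ) < c := by linarith
      have hlogpos : 0 < Real.log c := Real.log_pos hc1
      have hle : Real.log c - 1 + c⁻¹ ≤ Real.log c := by
        have : c⁻¹ ≤ 1 := by rw [inv_le_one_iff₀]; right; linarith
        linarith
      have h2 : (2:ℝ) ≤ Real.log c := by
        have he : Real.exp 2 < 8 := by
          have h9 := Real.exp_one_lt_d9
          calc Real.exp 2 = Real.exp 1 * Real.exp 1 := by
                rw [← Real.exp_add]; norm_num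
            _ < 2.7182818286 * 2.7182818286 := by nlinarith [Real.exp_pos 1]
            _ < 8 := by norm_num
        calc (2:ℝ) = Real.log (Real.exp 2) := (Real.log_exp 2).symm
          _ ≤ Real.log c := Real.log_le_log (Real.exp_pos 2) (by linarith)
      have hu0 : (0:ℝ) < Real.log c - 1 + c⁻¹ := by
        have : (0:ℝ) < c⁻¹ := by positivity
        linarith
      exact (div_le_div_iff_of_pos_right hlogpos).mpr (Real.log_le_log hu0 hle)
  have t2 : Tendsto (fun c : ℝ => 1 + Real.log (Real.log c - 1 + c⁻¹) / Real.log c) atTop (nhds 1) := by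
    simpa using tendsto_const_nhds.add hsq
  apply t2.congr'
  filter_upwards [eventually_ge_atTop (8:ℝ)] with c hc
  have hc1 : (1:ℝ) < c := by linarith
  have hc0 : (0:ℝ) < c := by linarith
  have hN1 : (0:ℝ) < c * Real.log c - c + 1 := pos1 hc1
  have hu0 : (0:ℝ) < Real.log c - 1 + c⁻¹ := by
    by_contra h
    push_neg at h
    have : c * (Real.log c - 1 + c⁻¹) ≤ 0 := mul_nonpos_of_nonneg_of_nonpos hc0.le h
    have heq : c * (Real.log c - 1 + c⁻¹) = c * Real.log c - c + 1 := by field_simp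
    linarith [heq ▸ this]
  have hlogc : Real.log c ≠ 0 := ne_of_gt (Real.log_pos hc1)
  have heq : c * Real.log c - c + 1 = c * (Real.log c - 1 + c⁻¹) := by field_simp
  rw [heq, Real.log_mul (ne_of_gt hc0) (ne_of_gt hu0), add_div, div_self hlogc]

-- c (log c)^2/(c-1)^2 → 0
lemma h_E : Tendsto (fun c : ℝ => c * (Real.log c)^2 / (c-1)^2) atTop (nhds 0) := by
  have a : Tendsto (fun c : ℝ => Real.log c / c ^ ((1:ℝ)/2)) atTop (nhds 0) :=
    (isLittleO_log_rpow_atTop (by norm_num)).tendsto_div_nhds_zero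
  have b : Tendsto (fun c : ℝ => (Real.log c)^2 / c) atTop (nhds 0) := by
    have := a.mul a
    rw [show (0:ℝ)*0 = 0 by ring] at this
    apply this.congr'
    filter_upwards [eventually_gt_atTop (0:ℝ)] with c hc
    rw [div_mul_div_comm, ← Real.rpow_add hc]
    norm_num
    try rw [Real.rpow_one]
    ring
  have d : Tendsto (fun c : ℝ => c/(c-1)) atTop (nhds 1) := by
    have hinv : Tendsto (fun c : ℝ => (c-1)⁻¹) atTop (nhds 0) :=
      tendsto_inv_atTop_zero.comp (tendsto_atTop_add_const_right atTop (-1) tendsto_id)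
    have := (tendsto_const_nhds : Tendsto (fun _ : ℝ => (1:ℝ)) atTop (nhds 1)).add hinv
    rw [show (1:ℝ) + 0 = 1 by ring] at this
    apply this.congr'
    filter_upwards [eventually_gt_atTop (1:ℝ)] with c hc
    have : c - 1 ≠ 0 := sub_ne_zero.mpr (ne_of_gt hc)
    field_simp
    ring
  have prod := b.mul (d.pow 2)
  rw [show (0:ℝ) * 1^2 = 0 by ring] at prod
  apply prod.congr'
  filter_upwards [eventually_gt_atTop (1:ℝ)] with c hc
  have hc0 : c ≠ 0 := by intro h; rw [h] at hc; linarith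
  have hc1 : c - 1 ≠ 0 := sub_ne_zero.mpr (ne_of_gt hc)
  field_simp

lemma part2 : Tendsto
      (fun c : ℝ =>
        Real.log ((c * Real.log c - c + 1) ^ 2 / (c - 1) ^ 4) /
          Real.log (c * ((c - 1) ^ 2 - c * (Real.log c) ^ 2) / (c - 1) ^ 4))
      atTop (nhds 2) := by
  -- numerator over log c → -2
  have TA : Tendsto (fun c : ℝ =>
      Real.log ((c * Real.log c - c + 1) ^ 2 / (c - 1) ^ 4) / Real.log c) atTop (nhds (-2)) := by
    have t := (h_N1.const_mul (2:ℝ)).sub (h_sub1.const_mul (4:ℝ))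
    rw [show (2:ℝ)*1 - 4*1 = -2 by ring] at t
    apply t.congr'
    filter_upwards [eventually_gt_atTop (1:ℝ)] with c hc
    have hN1 : (0:ℝ) < c * Real.log c - c + 1 := pos1 hc
    have hc1 : (0:ℝ) < c - 1 := by linarith
    rw [Real.log_div (by positivity) (by positivity), Real.log_pow, Real.log_pow,
      sub_div, mul_div_assoc, mul_div_assoc]
    push_cast
    ring
  -- denominator over log c → -1
  have TB : Tendsto (fun c : ℝ =>
      Real.log (c * ((c - 1) ^ 2 - c * (Real.log c) ^ 2) / (c - 1) ^ 4) / Real.log c)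
      atTop (nhds (-1)) := by
    have hEE : Tendsto (fun c : ℝ => 1 - c * (Real.log c)^2 / (c-1)^2) atTop (nhds 1) := by
      have := (tendsto_const_nhds : Tendsto (fun _ : ℝ => (1:ℝ)) atTop (nhds 1)).sub h_E
      rw [show (1:ℝ) - 0 = 1 by ring] at this
      exact this
    have hlogE : Tendsto (fun c : ℝ => Real.log (1 - c * (Real.log c)^2 / (c-1)^2))
        atTop (nhds 0) := by
      have := (Real.continuousAt_log (by norm_num : (1:ℝ) ≠ 0)).tendsto.comp hEE
      simpa [Function.comp_def] using this
    have hE' := hlogE.div_atTop Real.tendsto_log_atTop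
    have t := (tendsto_const_nhds (x := (1:ℝ)) (f := atTop)).add hE' |>.sub (h_sub1.const_mul (2:ℝ))
    rw [show (1:ℝ) + 0 - 2*1 = -1 by ring] at t
    apply t.congr'
    filter_upwards [eventually_gt_atTop (1:ℝ)] with c hc
    have hc0 : (0:ℝ) < c := by linarith
    have hc1 : (0:ℝ) < c - 1 := by linarith
    have hN2 : (0:ℝ) < (c-1)^2 - c * (Real.log c)^2 := pos2 hc
    have hEpos : (0:ℝ) < 1 - c * (Real.log c)^2 / (c-1)^2 := by
      have h := div_pos hN2 (pow_pos hc1 2)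
      have : ((c-1)^2 - c * (Real.log c)^2) / (c-1)^2 = 1 - c * (Real.log c)^2 / (c-1)^2 := by
        field_simp
      linarith [this ▸ h]
    have hsplit : c * ((c - 1) ^ 2 - c * (Real.log c) ^ 2) / (c - 1) ^ 4
        = c * (1 - c * (Real.log c)^2 / (c-1)^2) / (c-1)^2 := by
      field_simp
    have hlogc : Real.log c ≠ 0 := ne_of_gt (Real.log_pos hc)
    rw [hsplit, Real.log_div (by positivity) (by positivity), Real.log_mul (ne_of_gt hc0)
      (ne_of_gt hEpos), Real.log_pow, sub_div, add_div, div_self hlogc,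
      mul_div_assoc]
    push_cast
    ring
  have hdiv := TA.div TB (by norm_num)
  rw [show (-2:ℝ)/(-1) = 2 by norm_num] at hdiv
  apply Filter.Tendsto.congr' _ hdiv
  filter_upwards [eventually_gt_atTop (1:ℝ)] with c hc
  have hlogc : Real.log c ≠ 0 := ne_of_gt (Real.log_pos hc)
  simp only [Pi.div_apply]
  rw [div_div_eq_mul_div, div_mul_cancel₀ _ hlogc]

end helpers

/-- The log-scale bias-to-variance ratio
`g(c) = log((c·log c - c + 1)^2/(c-1)^4) / log(c((c-1)^2 - c(log c)^2)/(c-1)^4)`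
tends to `log 4 / log 12` as `c → 1⁺` and to `2` as `c → ∞`. -/
theorem log_ratio_limits :
    Tendsto
      (fun c : ℝ =>
        Real.log ((c * Real.log c - c + 1) ^ 2 / (c - 1) ^ 4) /
          Real.log (c * ((c - 1) ^ 2 - c * (Real.log c) ^ 2) / (c - 1) ^ 4))
      (nhdsWithin 1 (Ioi 1)) (nhds (Real.log 4 / Real.log 12)) ∧
    Tendsto
      (fun c : ℝ =>
        Real.log ((c * Real.log c - c + 1) ^ 2 / (c - 1) ^ 4) /
          Real.log (c * ((c - 1) ^ 2 - c * (Real.log c) ^ 2) / (c - 1) ^ 4))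
      atTop (nhds 2) := ⟨part1, part2⟩
end

section
/- With BVG = Σ_{i∈[K]} BVG(i) the total bias-variance gap, E_{Y|X}[BVG] = 1 - E_θ||h_θ(·|X)||_2^2 + 2·Σ_{i∈[K]} h(i|X)·Δ(i|X), where Δ(i|X) = h(i|X) - P(Y=i|X). In particular, if the model is sample-wise perfectly calibrated (Δ(i|X)=0 for all i), then E_{Y|X}[BVG] = 1 - E_θ||h_θ(·|X)||_2^2 ≥ 0, i.e., variance is bounded above by squared bias in expectation. -/
open MeasureTheory Finset

/-- Total bias-variance gap identity:
`E_{Y|X}[BVG] = 1 - E_θ‖h_θ(·|X)‖² + 2∑_i h(i|X)Δ(i|X)`,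
and under sample-wise perfect calibration (`Δ(i|X) = 0` for all `i`)
`E_{Y|X}[BVG] = 1 - E_θ‖h_θ(·|X)‖² ≥ 0`. -/
theorem total_BVG {Θ : Type*} [MeasurableSpace Θ]
    (Pθ : Measure Θ) [IsProbabilityMeasure Pθ]
    (K : ℕ) (hθ : Θ → Fin K → ℝ) (p : Fin K → ℝ)
    (hp : ∀ i, 0 ≤ p i) (hps : ∑ i, p i = 1)
    (hprob : ∀ θ, (∀ i, 0 ≤ hθ θ i) ∧ ∑ i, hθ θ i = 1)
    (hint : ∀ i, Integrable (fun θ => hθ θ i) Pθ)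
    (hint2 : Integrable (fun θ => ∑ i, (hθ θ i) ^ 2) Pθ)
    (h : Fin K → ℝ) (hdef : ∀ i, h i = ∫ θ, hθ θ i ∂Pθ) :
    (∑ y : Fin K, p y * (∑ i : Fin K,
        ((h i - (if y = i then (1 : ℝ) else 0)) ^ 2
          - ∫ θ, (hθ θ i - h i) ^ 2 ∂Pθ))
      = 1 - (∫ θ, ∑ i, (hθ θ i) ^ 2 ∂Pθ) + 2 * ∑ i : Fin K, h i * (h i - p i)) ∧
    ((∀ i, h i = p i) →
      (∑ y : Fin K, p y * (∑ i : Fin K,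
          ((h i - (if y = i then (1 : ℝ) else 0)) ^ 2
            - ∫ θ, (hθ θ i - h i) ^ 2 ∂Pθ))
        = 1 - ∫ θ, ∑ i, (hθ θ i) ^ 2 ∂Pθ) ∧
      0 ≤ 1 - ∫ θ, ∑ i, (hθ θ i) ^ 2 ∂Pθ) := by
  have hle1 : ∀ θ i, hθ θ i ≤ 1 := by
    intro θ i
    calc hθ θ i ≤ ∑ j, hθ θ j :=
          Finset.single_le_sum (fun j _ => (hprob θ).1 j) (Finset.mem_univ i)
      _ = 1 := (hprob θ).2
  have hsq_int : ∀ i, Integrable (fun θ => (hθ θ i) ^ 2) Pθ := by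
    intro i
    refine (hint i).mono' ?_ ?_
    · exact ((hint i).1.mul (hint i).1).congr (by filter_upwards with θ; simp [sq])
    · filter_upwards with θ
      have h0 := (hprob θ).1 i
      have h1 := hle1 θ i
      rw [Real.norm_eq_abs, abs_of_nonneg (by positivity)]
      nlinarith
  have hvar : ∀ i, (∫ θ, (hθ θ i - h i) ^ 2 ∂Pθ)
      = (∫ θ, (hθ θ i) ^ 2 ∂Pθ) - (h i) ^ 2 := by
    intro i
    have e : (fun θ => (hθ θ i - h i) ^ 2)
        = fun θ => ((hθ θ i) ^ 2 - (2 * h i) * hθ θ i) + (h i) ^ 2 := by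
      funext θ; ring
    have i0 : Integrable (fun θ => (2 * h i) * hθ θ i) Pθ := (hint i).const_mul _
    have i1 : Integrable (fun θ => (hθ θ i) ^ 2 - (2 * h i) * hθ θ i) Pθ :=
      (hsq_int i).sub i0
    rw [e, integral_add i1 (integrable_const _),
      integral_sub (hsq_int i) i0, integral_const_mul, integral_const]
    simp only [measure_univ, ENNReal.toReal_one, probReal_univ, one_smul]
    rw [← hdef i]
    ring
  have hA : (∫ θ, ∑ i, (hθ θ i) ^ 2 ∂Pθ) = ∑ i, ∫ θ, (hθ θ i) ^ 2 ∂Pθ :=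
    integral_finset_sum _ (fun i _ => hsq_int i)
  set A := ∫ θ, ∑ i, (hθ θ i) ^ 2 ∂Pθ with hAdef
  have key : ∀ y : Fin K, (∑ i : Fin K,
      ((h i - (if y = i then (1 : ℝ) else 0)) ^ 2
        - ∫ θ, (hθ θ i - h i) ^ 2 ∂Pθ))
      = 1 - A + 2 * ∑ i, (h i) ^ 2 - 2 * h y := by
    intro y
    have e : ∀ i : Fin K, (h i - (if y = i then (1 : ℝ) else 0)) ^ 2
        - ∫ θ, (hθ θ i - h i) ^ 2 ∂Pθ
        = 2 * (h i) ^ 2 - (2 * h i) * (if y = i then (1 : ℝ) else 0)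
          + (if y = i then (1 : ℝ) else 0)
          - ∫ θ, (hθ θ i) ^ 2 ∂Pθ := by
      intro i
      rw [hvar i]
      by_cases hy : y = i <;> simp [hy] <;> ring
    rw [Finset.sum_congr rfl (fun i _ => e i)]
    rw [hA]
    simp [Finset.sum_sub_distrib, Finset.sum_add_distrib, mul_ite,
      Finset.sum_ite_eq, Finset.mul_sum]
    ring
  have main : (∑ y : Fin K, p y * (∑ i : Fin K,
      ((h i - (if y = i then (1 : ℝ) else 0)) ^ 2
        - ∫ θ, (hθ θ i - h i) ^ 2 ∂Pθ)))
      = 1 - A + 2 * ∑ i : Fin K, h i * (h i - p i) := by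
    rw [Finset.sum_congr rfl (fun y _ => by rw [key y])]
    have e1 : ∀ y : Fin K, p y * (1 - A + 2 * ∑ i, (h i) ^ 2 - 2 * h y)
        = (1 - A + 2 * ∑ i, (h i) ^ 2) * p y - 2 * (p y * h y) := fun y => by ring
    rw [Finset.sum_congr rfl (fun y _ => e1 y), Finset.sum_sub_distrib,
      ← Finset.mul_sum, ← Finset.mul_sum, hps, mul_one]
    have e2 : ∑ i : Fin K, h i * (h i - p i)
        = (∑ i, (h i) ^ 2) - ∑ i, p i * h i := by
      rw [← Finset.sum_sub_distrib]
      exact Finset.sum_congr rfl (fun i _ => by ring)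
    rw [e2]
    have e3 : ∑ i : Fin K, p i * h i = ∑ y : Fin K, p y * h y := rfl
    rw [e3]; ring
  refine ⟨main, fun hcal => ⟨?_, ?_⟩⟩
  · rw [main]
    have : ∑ i : Fin K, h i * (h i - p i) = 0 := by
      apply Finset.sum_eq_zero; intro i _; rw [hcal i]; ring
    rw [this]; ring
  · have hle : A ≤ ∫ _θ, (1 : ℝ) ∂Pθ := by
      refine integral_mono hint2 (integrable_const 1) ?_
      intro θ
      calc ∑ i, (hθ θ i) ^ 2 ≤ ∑ i, hθ θ i := by
            refine Finset.sum_le_sum (fun i _ => ?_)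
            have h0 := (hprob θ).1 i
            have h1 := hle1 θ i
            nlinarith
        _ = 1 := (hprob θ).2
    simp at hle
    linarith
end

section
/- There exists a binary classification setup where the KL-divergence bias-variance decomposition has expected bias log 2 and the expected variance can take any value in (0, ∞): specifically, with P(Y=i|x) = 1/2 for i=1,2, and ensemble h_1(1|x) = ε, h_1(2|x) = 1-ε, h_2(1|x) = 1-ε, h_2(2|x) = ε with θ uniform on {1,2}, the geometric-mean function h satisfies h(i|x) = 1/2 (so Bias² = KL(e_Y || h(·|x)) = log 2), and the variance equals -log 2 - (1/2)·log(ε(1-ε)), which ranges over (0,∞) as ε ranges over (0, 1/2). -/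
/-- In the KL bias-variance decomposition of the binary ensemble
`h_1 = (ε, 1-ε)`, `h_2 = (1-ε, ε)` with θ uniform on {1,2} and `P(Y=i|x) = 1/2`:
the geometric-mean function equals `1/2` on each class (so the bias
`KL(e_Y‖h) = -log(1/2) = log 2`), the variance `-log Z` equals
`-log 2 - (1/2)log(ε(1-ε))` and is positive, and it attains every value in `(0, ∞)`
as ε ranges over `(0, 1/2)`. -/
theorem kl_bias_variance_no_correlation :
    (∀ ε : ℝ, 0 < ε → ε < 1 / 2 →
      (Real.exp ((Real.log ε + Real.log (1 - ε)) / 2) /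
          (2 * Real.exp ((Real.log ε + Real.log (1 - ε)) / 2)) = 1 / 2) ∧
      (-Real.log (1 / 2 : ℝ) = Real.log 2) ∧
      (-Real.log (2 * Real.exp ((Real.log ε + Real.log (1 - ε)) / 2))
          = -Real.log 2 - Real.log (ε * (1 - ε)) / 2) ∧
      0 < -Real.log 2 - Real.log (ε * (1 - ε)) / 2) ∧
    (∀ r : ℝ, 0 < r → ∃ ε : ℝ, 0 < ε ∧ ε < 1 / 2 ∧
      -Real.log 2 - Real.log (ε * (1 - ε)) / 2 = r) := by
  constructor
  · intro ε hε hε2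
    have hε1 : (0:ℝ) < 1 - ε := by linarith
    have hlog : Real.log (ε * (1 - ε)) = Real.log ε + Real.log (1 - ε) :=
      Real.log_mul (ne_of_gt hε) (ne_of_gt hε1)
    refine ⟨?_, ?_, ?_, ?_⟩
    · have h := (Real.exp_pos ((Real.log ε + Real.log (1 - ε)) / 2)).ne'
      field_simp
    · rw [Real.log_div one_ne_zero two_ne_zero, Real.log_one]; ring
    · rw [Real.log_mul two_ne_zero (Real.exp_pos _).ne', Real.log_exp, hlog]; ring
    · have hlt : ε * (1 - ε) < 1 / 4 := by nlinarith
      have h1 : Real.log (ε * (1 - ε)) < Real.log (1 / 4) :=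
        Real.log_lt_log (by positivity) hlt
      have h2 : Real.log (1 / 4 : ℝ) = -(2 * Real.log 2) := by
        rw [Real.log_div one_ne_zero (by norm_num), Real.log_one]
        rw [show (4:ℝ) = 2 ^ 2 by norm_num, Real.log_pow]
        push_cast; ring
      linarith
  · intro r hr
    set c : ℝ := Real.exp (-2 * r - 2 * Real.log 2) with hc
    have hcpos : 0 < c := Real.exp_pos _
    have hclt : c < 1 / 4 := by
      have : -2 * r - 2 * Real.log 2 < Real.log (1 / 4) := by
        rw [Real.log_div one_ne_zero (by norm_num), Real.log_one,
          show (4:ℝ) = 2 ^ 2 by norm_num, Real.log_pow]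
        push_cast; linarith
      calc c < Real.exp (Real.log (1 / 4)) := Real.exp_lt_exp.2 this
        _ = 1 / 4 := Real.exp_log (by norm_num)
    set ε : ℝ := (1 - Real.sqrt (1 - 4 * c)) / 2 with hεdef
    have hs0 : 0 ≤ 1 - 4 * c := by linarith
    have hsq : Real.sqrt (1 - 4 * c) ^ 2 = 1 - 4 * c := Real.sq_sqrt hs0
    have hslt : Real.sqrt (1 - 4 * c) < 1 := by
      nlinarith [Real.sqrt_nonneg (1 - 4 * c)]
    have hspos : 0 < Real.sqrt (1 - 4 * c) := Real.sqrt_pos.2 (by linarith)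
    have hεpos : 0 < ε := by rw [hεdef]; linarith
    have hεlt : ε < 1 / 2 := by rw [hεdef]; linarith
    refine ⟨ε, hεpos, hεlt, ?_⟩
    have hprod : ε * (1 - ε) = c := by
      rw [hεdef]; nlinarith [hsq]
    rw [hprod, hc, Real.log_exp]; ring
end
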